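/- (Proposition 7, Bayesian conjugate gradient directions) Define r_j = b − A x_j, s̃₁ = r₀, s₁ = s̃₁ / ‖s̃₁‖_{AΣ₀Aᵀ}, and for j > 1, s̃_j = r_{j−1} − ⟨s_{j−1}, r_{j−1}⟩_{AΣ₀Aᵀ} s_{j−1} and s_j = s̃_j / ‖s̃_j‖_{AΣ₀Aᵀ}, where the iterates are x_j = x_{j−1} + Σ₀ Aᵀ s_j (s_jᵀ r_{j−1}). If s̃_j ≠ 0 for all j ≤ m, then the set {s₁,…,s_m} is A Σ₀ Aᵀ-orthonormal: s_iᵀ A Σ₀ Aᵀ s_j = δ_{ij} for all i, j ≤ m. -/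

import Mathlib

open Matrix

/-- **Proposition 7.** The Bayesian conjugate gradient search directions,
defined by `s̃₁ = r₀`, `s̃_j = r_{j−1} − ⟨s_{j−1}, r_{j−1}⟩_{AΣ₀Aᵀ} s_{j−1}` for `j > 1`,
`s_j = s̃_j / ‖s̃_j‖_{AΣ₀Aᵀ}`, with iterates `x_j = x_{j−1} + Σ₀ Aᵀ s_j (s_jᵀ r_{j−1})` and
residuals `r_j = b − A x_j`, form an `A Σ₀ Aᵀ`-orthonormal set, provided `s̃_j ≠ 0` for all
`j ≤ m`. -/
theorem bayescg_directions_orthonormal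
    (d m : ℕ) (hm : m ≤ d)
    (A : Matrix (Fin d) (Fin d) ℝ) (hA : IsUnit A)
    (b : Fin d → ℝ)
    (Sigma0 : Matrix (Fin d) (Fin d) ℝ) (hSigma0 : Sigma0.PosDef)
    (x0 : Fin d → ℝ)
    (x s st r : ℕ → Fin d → ℝ)
    (hx0 : x 0 = x0)
    (hr : ∀ j, j ≤ m → r j = b - A *ᵥ x j)
    (hst1 : st 1 = r 0)
    (hstj : ∀ j, 2 ≤ j → j ≤ m →
      st j = r (j - 1) - (s (j - 1) ⬝ᵥ ((A * Sigma0 * Aᵀ) *ᵥ r (j - 1))) • s (j - 1))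
    (hs : ∀ j, 1 ≤ j → j ≤ m →
      s j = (Real.sqrt (st j ⬝ᵥ ((A * Sigma0 * Aᵀ) *ᵥ st j)))⁻¹ • st j)
    (hx : ∀ j, 1 ≤ j → j ≤ m →
      x j = x (j - 1) + (s j ⬝ᵥ r (j - 1)) • ((Sigma0 * Aᵀ) *ᵥ s j))
    (hnz : ∀ j, 1 ≤ j → j ≤ m → st j ≠ 0) :
    ∀ i j, 1 ≤ i → i ≤ m → 1 ≤ j → j ≤ m →
      s i ⬝ᵥ ((A * Sigma0 * Aᵀ) *ᵥ s j) = if i = j then 1 else 0 := by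
  set M : Matrix (Fin d) (Fin d) ℝ := A * Sigma0 * Aᵀ with hMdef
  -- Σ₀ is symmetric
  have hS0sym : Sigma0ᵀ = Sigma0 := by
    have h := hSigma0.1
    simpa [Matrix.IsHermitian, Matrix.conjTranspose, Matrix.map, Matrix.transpose] using h
  -- M is symmetric
  have hMt : Mᵀ = M := by
    rw [hMdef, transpose_mul, transpose_mul, transpose_transpose, hS0sym, ← mul_assoc]
  -- symmetry of the bilinear form
  have hsym : ∀ u v : Fin d → ℝ, u ⬝ᵥ (M *ᵥ v) = v ⬝ᵥ (M *ᵥ u) := by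
    intro u v
    rw [dotProduct_mulVec, ← mulVec_transpose, hMt, dotProduct_comm]
  -- positivity of the quadratic form
  have hpos : ∀ v : Fin d → ℝ, v ≠ 0 → 0 < v ⬝ᵥ (M *ᵥ v) := by
    intro v hv
    have hAT : Function.Injective (Aᵀ).mulVec :=
      mulVec_injective_iff_isUnit.2 ((isUnit_transpose A).2 hA)
    have hv' : Aᵀ *ᵥ v ≠ 0 := by
      intro h
      apply hv
      apply hAT
      rw [h, mulVec_zero]
    have hpd := hSigma0.dotProduct_mulVec_pos hv'
    have hrw : v ⬝ᵥ (M *ᵥ v) = (Aᵀ *ᵥ v) ⬝ᵥ (Sigma0 *ᵥ (Aᵀ *ᵥ v)) := by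
      rw [hMdef, ← mulVec_mulVec, ← mulVec_mulVec, dotProduct_mulVec, ← mulVec_transpose]
    rw [hrw]
    simpa using hpd
  -- squared norms are positive
  have hq : ∀ k, 1 ≤ k → k ≤ m → 0 < st k ⬝ᵥ (M *ᵥ st k) := fun k h1 h2 =>
    hpos _ (hnz k h1 h2)
  have hn : ∀ k, 1 ≤ k → k ≤ m → 0 < Real.sqrt (st k ⬝ᵥ (M *ᵥ st k)) := fun k h1 h2 =>
    Real.sqrt_pos.2 (hq k h1 h2)
  -- `st k` is a positive multiple of `s k`
  have hstk : ∀ k, 1 ≤ k → k ≤ m →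
      Real.sqrt (st k ⬝ᵥ (M *ᵥ st k)) • s k = st k := by
    intro k h1 h2
    rw [hs k h1 h2, smul_smul, mul_inv_cancel₀ (hn k h1 h2).ne', one_smul]
  -- unit norm
  have hN : ∀ k, 1 ≤ k → k ≤ m → s k ⬝ᵥ (M *ᵥ s k) = 1 := by
    intro k h1 h2
    have h := hq k h1 h2
    rw [hs k h1 h2, mulVec_smul, dotProduct_smul, smul_dotProduct, smul_eq_mul, smul_eq_mul]
    rw [show st k ⬝ᵥ (M *ᵥ st k) =
        Real.sqrt (st k ⬝ᵥ (M *ᵥ st k)) * Real.sqrt (st k ⬝ᵥ (M *ᵥ st k)) from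
      (Real.mul_self_sqrt h.le).symm]
    field_simp
    rw [Real.sqrt_sq (Real.sqrt_nonneg _)]
  -- residual recursion
  have hrrec : ∀ k, 1 ≤ k → k ≤ m →
      r k = r (k - 1) - (s k ⬝ᵥ r (k - 1)) • (M *ᵥ s k) := by
    intro k h1 h2
    rw [hr k h2, hx k h1 h2, mulVec_add, mulVec_smul, mulVec_mulVec, ← mul_assoc, ← hMdef,
      sub_add_eq_sub_sub, ← hr (k - 1) (by omega)]
  -- α is nonzero (given the previous residual orthogonality)
  have halpha : ∀ k, 1 ≤ k → k ≤ m → (2 ≤ k → s (k - 1) ⬝ᵥ r (k - 1) = 0) →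
      s k ⬝ᵥ r (k - 1) ≠ 0 := by
    intro k h1 h2 hprev
    rw [hs k h1 h2, smul_dotProduct, smul_eq_mul]
    refine mul_ne_zero (inv_ne_zero (hn k h1 h2).ne') ?_
    rcases eq_or_lt_of_le h1 with h | h
    · -- k = 1
      subst h
      rw [show (1 : ℕ) - 1 = 0 from rfl, hst1]
      intro hc
      exact hnz 1 le_rfl h2 (by rw [hst1]; exact dotProduct_self_eq_zero.1 hc)
    · -- k ≥ 2
      have h2k : 2 ≤ k := h
      have hrne : r (k - 1) ≠ 0 := by
        intro h0
        apply hnz k h1 h2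
        rw [hstj k h2k h2, h0, mulVec_zero, dotProduct_zero, zero_smul, sub_zero]
      have : st k ⬝ᵥ r (k - 1) = r (k - 1) ⬝ᵥ r (k - 1) := by
        rw [hstj k h2k h2, sub_dotProduct, smul_dotProduct, smul_eq_mul,
          hprev h2k, mul_zero, sub_zero]
      rw [this]
      exact fun hc => hrne (dotProduct_self_eq_zero.1 hc)
  -- main induction
  have key : ∀ j, j ≤ m →
      (∀ i k, 1 ≤ i → i ≤ j → 1 ≤ k → k ≤ j → i ≠ k → s i ⬝ᵥ (M *ᵥ s k) = 0) ∧
      (∀ l i, 1 ≤ i → i ≤ l → l ≤ j → s i ⬝ᵥ r l = 0) ∧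
      (∀ k l, k < l → l ≤ j → r k ⬝ᵥ r l = 0) := by
    intro j
    induction j with
    | zero =>
      exact fun _ => ⟨fun i k h1 h2 => by omega, fun l i h1 h2 h3 => by omega,
        fun k l h1 h2 => by omega⟩
    | succ j IH =>
      intro hj1
      obtain ⟨O, B, R⟩ := IH (by omega)
      -- new orthogonality relations
      have newO : ∀ i, 1 ≤ i → i ≤ j → s i ⬝ᵥ (M *ᵥ s (j + 1)) = 0 := by
        intro i h1 h2
        have hj2 : 2 ≤ j + 1 := by omega
        rw [hs (j + 1) (by omega) hj1, mulVec_smul, dotProduct_smul, smul_eq_mul]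
        refine mul_eq_zero_of_right _ ?_
        rw [hstj (j + 1) hj2 hj1]
        simp only [Nat.add_sub_cancel]
        rw [mulVec_sub, mulVec_smul, dotProduct_sub, dotProduct_smul, smul_eq_mul]
        rcases eq_or_lt_of_le h2 with hij | hij
        · -- i = j
          subst hij
          rw [hN i h1 (by omega), mul_one, sub_self]
        · -- i < j
          have hOij : s i ⬝ᵥ (M *ᵥ s j) = 0 := O i j h1 h2 (by omega) le_rfl (by omega)
          rw [hOij, mul_zero, sub_zero]
          -- show s i ⬝ᵥ (M *ᵥ r j) = 0 using M s i ∝ r (i-1) - r i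
          have hai : s i ⬝ᵥ r (i - 1) ≠ 0 := by
            refine halpha i h1 (by omega) ?_
            intro h2i
            exact B (i - 1) (i - 1) (by omega) le_rfl (by omega)
          have hrec : (s i ⬝ᵥ r (i - 1)) • (M *ᵥ s i) = r (i - 1) - r i := by
            rw [hrrec i h1 (by omega)]; abel
          have hmul : (s i ⬝ᵥ r (i - 1)) * (s i ⬝ᵥ (M *ᵥ r j)) = 0 := by
            rw [hsym (s i) (r j), dotProduct_comm (r j) (M *ᵥ s i), ← smul_eq_mul,
              ← smul_dotProduct, hrec, sub_dotProduct,
              R (i - 1) j (by omega) le_rfl, R i j (by omega) le_rfl, sub_zero]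
          rcases mul_eq_zero.1 hmul with h | h
          · exact absurd h hai
          · exact h
      have newO' : ∀ i, 1 ≤ i → i ≤ j → s (j + 1) ⬝ᵥ (M *ᵥ s i) = 0 := by
        intro i h1 h2
        rw [hsym]
        exact newO i h1 h2
      have O' : ∀ i k, 1 ≤ i → i ≤ j + 1 → 1 ≤ k → k ≤ j + 1 → i ≠ k →
          s i ⬝ᵥ (M *ᵥ s k) = 0 := by
        intro i k h1 h2 h3 h4 hne
        rcases Nat.lt_or_ge i (j + 1) with hi | hi
        · rcases Nat.lt_or_ge k (j + 1) with hk | hk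
          · exact O i k h1 (by omega) h3 (by omega) hne
          · have : k = j + 1 := by omega
            subst this
            exact newO i h1 (by omega)
        · have : i = j + 1 := by omega
          subst this
          have : k ≤ j := by omega
          exact newO' k h3 this
      -- orthogonality of residual to all directions
      have B1 : ∀ i, 1 ≤ i → i ≤ j + 1 → s i ⬝ᵥ r (j + 1) = 0 := by
        intro i h1 h2
        have hrec := hrrec (j + 1) (by omega) hj1
        simp only [Nat.add_sub_cancel] at hrec
        rw [hrec, dotProduct_sub, dotProduct_smul, smul_eq_mul]
        rcases Nat.lt_or_ge i (j + 1) with hi | hi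
        · rw [B j i h1 (by omega) le_rfl, newO i h1 (by omega), mul_zero, sub_zero]
        · have : i = j + 1 := by omega
          subst this
          rw [hN (j + 1) (by omega) hj1, mul_one, sub_self]
      have B' : ∀ l i, 1 ≤ i → i ≤ l → l ≤ j + 1 → s i ⬝ᵥ r l = 0 := by
        intro l i h1 h2 h3
        rcases Nat.lt_or_ge l (j + 1) with hl | hl
        · exact B l i h1 h2 (by omega)
        · have : l = j + 1 := by omega
          subst this
          exact B1 i h1 h2
      have R' : ∀ k l, k < l → l ≤ j + 1 → r k ⬝ᵥ r l = 0 := by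
        intro k l hkl hl
        rcases Nat.lt_or_ge l (j + 1) with hlj | hlj
        · exact R k l hkl (by omega)
        · have hlj1 : l = j + 1 := by omega
          subst hlj1
          rcases Nat.eq_zero_or_pos k with hk0 | hk0
          · subst hk0
            rw [← hst1, ← hstk 1 le_rfl (by omega), smul_dotProduct, smul_eq_mul,
              B1 1 le_rfl (by omega), mul_zero]
          · -- k ≥ 1 : r k = st (k+1) + c • s k
            have hk1m : k + 1 ≤ m := by omega
            have hstk1 := hstj (k + 1) (by omega) hk1m
            simp only [Nat.add_sub_cancel] at hstk1
            have hrk : r k = st (k + 1) +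
                (s k ⬝ᵥ (M *ᵥ r k)) • s k := by
              rw [hstk1]; abel
            rw [hrk, add_dotProduct, smul_dotProduct, smul_eq_mul,
              ← hstk (k + 1) (by omega) hk1m, smul_dotProduct, smul_eq_mul,
              B1 (k + 1) (by omega) (by omega), B1 k (by omega) (by omega), mul_zero,
              mul_zero, add_zero]
      exact ⟨O', B', R'⟩
  obtain ⟨O, B, R⟩ := key m le_rfl
  intro i j h1 h2 h3 h4
  by_cases hij : i = j
  · subst hij
    rw [if_pos rfl]
    exact hN i h1 h2
  · rw [if_neg hij]
    exact O i j h1 h2 h3 h4 hij
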